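/- arXiv:1307.8418 — 3 statements merged into one kernel-verified Lean document; each statement's English description precedes it below -/
import Mathlib

section
/- Let V be a finite-dimensional Z/2-graded complex vector space with even part V₊ and odd part V₋, and let A = A₊ ⊕ A₋ be a homogeneous (even) endomorphism of V, where A₊, A₋ are the restrictions to V₊, V₋. Suppose A₊ and A₋ do not have the same eigenvalues (counted with multiplicity) on the circle {|λ| = ρ(A)}, where ρ(A) is the spectral radius of A. Then limsup_{n→∞} |sTr(Aⁿ)|^{1/n} = ρ(A), where sTr(Aⁿ) = Tr(A₊ⁿ) − Tr(A₋ⁿ) is the supertrace. -/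
open Filter

open Polynomial Matrix in
section

lemma finset_prod_eq_list_prod {M : Type*} [CommMonoid M] (f : ℕ → M) (n : ℕ) :
    ∏ i ∈ Finset.range n, f i = ((List.range n).map f).prod := by
  induction n with
  | zero => simp
  | succ n ih => rw [Finset.prod_range_succ, List.range_succ]; simp [ih]

lemma multiset_prod_comm {β : Type*} [CommMonoid β] (s : Multiset β) (n : ℕ) (g : ℕ → β → β) :
    ∏ i ∈ Finset.range n, (s.map (g i)).prod
      = (s.map (fun μ => ∏ i ∈ Finset.range n, g i μ)).prod := by
  induction n with
  | zero => simp
  | succ n ih =>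
      simp [Finset.prod_range_succ, ih, ← Multiset.prod_map_mul]

lemma eval_charpoly' {k : ℕ} (M : Matrix (Fin k) (Fin k) ℂ) (x : ℂ) :
    M.charpoly.eval x = (x • (1 : Matrix (Fin k) (Fin k) ℂ) - M).det := by
  rw [Matrix.charpoly, eval_det, Matrix.matPolyEquiv_charmatrix]
  simp [Matrix.smul_one_eq_diagonal, Matrix.scalar_apply]

lemma det_scalar_pow {k n : ℕ} (hn : 0 < n) (M : Matrix (Fin k) (Fin k) ℂ) (x : ℂ) :
    (x • (1 : Matrix (Fin k) (Fin k) ℂ) - M ^ n).det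
      = (M.charpoly.roots.map (fun μ => x - μ ^ n)).prod := by
  obtain ⟨y, hy⟩ := IsAlgClosed.exists_pow_nat_eq x hn
  have hζ : IsPrimitiveRoot (Complex.exp (2 * Real.pi * Complex.I / n)) n :=
    Complex.isPrimitiveRoot_exp n hn.ne'
  set ζ : ℂ := Complex.exp (2 * Real.pi * Complex.I / n) with hζdef
  have hpoly : (X ^ n - C x : ℂ[X]) = ∏ i ∈ Finset.range n, (X - C (ζ ^ i * y)) :=
    X_pow_sub_C_eq_prod hζ hn hy
  have hcard : Multiset.card M.charpoly.roots = k := by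
    rw [Polynomial.splits_iff_card_roots.mp (IsAlgClosed.splits _),
      Matrix.charpoly_natDegree_eq_dim, Fintype.card_fin]
  have hsplit : M.charpoly = (M.charpoly.roots.map (fun a => X - C a)).prod :=
    (IsAlgClosed.splits _).eq_prod_roots_of_monic (Matrix.charpoly_monic M)
  have heval : ∀ c : ℂ, M.charpoly.eval c = (M.charpoly.roots.map (fun μ => c - μ)).prod := by
    intro c
    conv_lhs => rw [hsplit]
    rw [Polynomial.eval_multiset_prod, Multiset.map_map]
    simp
  have hmat : M ^ n - x • (1 : Matrix (Fin k) (Fin k) ℂ)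
      = ((List.range n).map (fun i => M - (ζ ^ i * y) • 1)).prod := by
    have h1 := congrArg (Polynomial.aeval M) hpoly
    rw [finset_prod_eq_list_prod] at h1
    rw [map_sub, map_pow, aeval_X, aeval_C, Algebra.algebraMap_eq_smul_one] at h1
    rw [h1, map_list_prod]
    rw [List.map_map]
    congr 1
    refine List.map_congr_left (fun i _ => ?_)
    simp [Algebra.algebraMap_eq_smul_one, _root_.smul_pow, smul_smul, mul_comm y]
  have hdet : (M ^ n - x • (1 : Matrix (Fin k) (Fin k) ℂ)).det
      = ∏ i ∈ Finset.range n, (M - (ζ ^ i * y) • 1).det := by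
    rw [hmat, finset_prod_eq_list_prod, ← Matrix.coe_detMonoidHom, map_list_prod, List.map_map]
    rfl
  have hdet2 : ∀ c : ℂ, (M - c • (1 : Matrix (Fin k) (Fin k) ℂ)).det
      = (-1 : ℂ) ^ k * (M.charpoly.roots.map (fun μ => c - μ)).prod := by
    intro c
    have h2 : M - c • (1 : Matrix (Fin k) (Fin k) ℂ) = -(c • 1 - M) := by abel
    rw [h2, Matrix.det_neg, Fintype.card_fin, ← eval_charpoly', heval]
  have hperμ : ∀ μ : ℂ, ∏ i ∈ Finset.range n, (ζ ^ i * y - μ) = (-1 : ℂ) ^ n * (μ ^ n - x) := by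
    intro μ
    have h3 := congrArg (Polynomial.eval μ) hpoly
    rw [Polynomial.eval_prod] at h3
    simp only [eval_sub, eval_pow, eval_X, eval_C] at h3
    calc ∏ i ∈ Finset.range n, (ζ ^ i * y - μ)
        = ∏ i ∈ Finset.range n, (-1 : ℂ) * (μ - ζ ^ i * y) :=
          Finset.prod_congr rfl (fun i _ => by ring)
      _ = (-1 : ℂ) ^ n * ∏ i ∈ Finset.range n, (μ - ζ ^ i * y) := by
          rw [Finset.prod_mul_distrib, Finset.prod_const, Finset.card_range]
      _ = (-1 : ℂ) ^ n * (μ ^ n - x) := by rw [← h3]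
  have lhs_eq : (x • (1 : Matrix (Fin k) (Fin k) ℂ) - M ^ n).det
      = (-1 : ℂ) ^ k * (M ^ n - x • 1).det := by
    have h4 : x • (1 : Matrix (Fin k) (Fin k) ℂ) - M ^ n = -(M ^ n - x • 1) := by abel
    rw [h4, Matrix.det_neg, Fintype.card_fin]
  have hfinal : (M.charpoly.roots.map (fun μ => x - μ ^ n)).prod
      = (-1 : ℂ) ^ k * (M.charpoly.roots.map (fun μ => μ ^ n - x)).prod := by
    rw [Multiset.map_congr rfl (fun (μ : ℂ) _ =>
      (by ring : x - μ ^ n = (-1 : ℂ) * (μ ^ n - x))), Multiset.prod_map_mul]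
    simp [hcard]
  calc (x • (1 : Matrix (Fin k) (Fin k) ℂ) - M ^ n).det
      = (-1:ℂ)^k * (M ^ n - x • 1).det := lhs_eq
    _ = (-1:ℂ)^k * ∏ i ∈ Finset.range n, (M - (ζ ^ i * y) • 1).det := by rw [hdet]
    _ = (-1:ℂ)^k * ∏ i ∈ Finset.range n,
          ((-1:ℂ)^k * (M.charpoly.roots.map (fun μ => ζ ^ i * y - μ)).prod) := by
        rw [Finset.prod_congr rfl (fun i _ => hdet2 (ζ ^ i * y))]
    _ = (-1:ℂ)^k * (((-1:ℂ)^k)^n *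
          (M.charpoly.roots.map (fun μ => ∏ i ∈ Finset.range n, (ζ ^ i * y - μ))).prod) := by
        rw [Finset.prod_mul_distrib, Finset.prod_const, Finset.card_range, multiset_prod_comm]
    _ = (-1:ℂ)^k * (((-1:ℂ)^k)^n *
          (M.charpoly.roots.map (fun μ => (-1:ℂ)^n * (μ ^ n - x))).prod) := by
        rw [Multiset.map_congr rfl (fun (μ : ℂ) _ => hperμ μ)]
    _ = (-1:ℂ)^k * (((-1:ℂ)^k)^n *
          (((-1:ℂ)^n)^k * (M.charpoly.roots.map (fun μ => μ ^ n - x)).prod)) := by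
        rw [Multiset.prod_map_mul]
        congr 2
        rw [Multiset.map_const', Multiset.prod_replicate, hcard]
    _ = (-1:ℂ)^k * (M.charpoly.roots.map (fun μ => μ ^ n - x)).prod := by
        rw [← pow_mul, ← pow_mul, ← mul_assoc ((-1:ℂ)^(k*n)), ← pow_add]
        have h5 : ((-1:ℂ)) ^ (k*n + n*k) = 1 := by
          have h6 : k*n + n*k = 2*(k*n) := by ring
          rw [h6, pow_mul]; norm_num
        rw [h5, one_mul]
    _ = (M.charpoly.roots.map (fun μ => x - μ ^ n)).prod := hfinal.symm

lemma charpoly_pow {k n : ℕ} (hn : 0 < n) (M : Matrix (Fin k) (Fin k) ℂ) :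
    (M ^ n).charpoly = ((M.charpoly.roots.map (fun μ => μ ^ n)).map (fun a => X - C a)).prod := by
  apply Polynomial.funext
  intro x
  rw [eval_charpoly', det_scalar_pow hn, Polynomial.eval_multiset_prod, Multiset.map_map,
    Multiset.map_map]
  congr 1
  refine Multiset.map_congr rfl (fun μ _ => ?_)
  simp

lemma trace_pow_matrix {k n : ℕ} (hn : 0 < n) (M : Matrix (Fin k) (Fin k) ℂ) :
    (M ^ n).trace = (M.charpoly.roots.map (fun μ => μ ^ n)).sum := by
  rw [Matrix.trace_eq_sum_roots_charpoly, charpoly_pow hn,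
    Polynomial.roots_multiset_prod_X_sub_C]

lemma trace_pow_lm {V : Type} [AddCommGroup V] [Module ℂ V] [FiniteDimensional ℂ V]
    (f : V →ₗ[ℂ] V) {n : ℕ} (hn : 0 < n) :
    LinearMap.trace ℂ V (f ^ n) = ((LinearMap.charpoly f).roots.map (fun μ => μ ^ n)).sum := by
  let b := Module.finBasis ℂ V
  rw [LinearMap.trace_eq_matrix_trace ℂ b, ← LinearMap.charpoly_toMatrix f b,
    ← LinearMap.toMatrix_pow b f n, trace_pow_matrix hn]

lemma expsum_coeff_zero {m : ℕ} (w : Fin m → ℂ) (hw : Function.Injective w)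
    (hw1 : ∀ j, ‖w j‖ = 1) (c : Fin m → ℂ)
    (h : Filter.Tendsto (fun n : ℕ => ∑ j, c j * w j ^ n) atTop (nhds 0)) :
    ∀ j, c j = 0 := by
  intro j
  set Vm : Matrix (Fin m) (Fin m) ℂ := (Matrix.vandermonde w)ᵀ with hVm
  have hdet : IsUnit Vm.det := by
    rw [Matrix.det_transpose]
    exact (Matrix.det_vandermonde_ne_zero_iff.mpr hw).isUnit
  set u : ℕ → (Fin m → ℂ) := fun n i => ∑ j, c j * w j ^ (n + i) with hu
  have hu0 : Tendsto u atTop (nhds 0) := by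
    rw [tendsto_pi_nhds]
    intro i
    have := h.comp (tendsto_add_atTop_nat (i : ℕ))
    exact this
  have hmv : ∀ n, u n = Vm.mulVec (fun j => c j * w j ^ n) := by
    intro n
    funext i
    simp only [Matrix.mulVec, dotProduct, hVm, Matrix.transpose_apply,
      Matrix.vandermonde_apply, hu]
    refine Finset.sum_congr rfl (fun l _ => ?_)
    rw [pow_add]
    ring
  have hrec : ∀ n, (fun j => c j * w j ^ n) = Vm⁻¹.mulVec (u n) := by
    intro n
    rw [hmv n, Matrix.mulVec_mulVec, Matrix.nonsing_inv_mul _ hdet, Matrix.one_mulVec]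
  have hcont : Tendsto (fun n => Vm⁻¹.mulVec (u n)) atTop (nhds (Vm⁻¹.mulVec 0)) := by
    have : Continuous (fun v : Fin m → ℂ => Vm⁻¹.mulVec v) :=
      Continuous.matrix_mulVec continuous_const continuous_id
    exact (this.tendsto 0).comp hu0
  rw [Matrix.mulVec_zero] at hcont
  have h2 : Tendsto (fun n => c j * w j ^ n) atTop (nhds 0) := by
    have := (tendsto_pi_nhds.mp hcont) j
    simp only [← hrec] at this
    simpa using this
  have h3 : Tendsto (fun n : ℕ => ‖c j * w j ^ n‖) atTop (nhds 0) := by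
    simpa using h2.norm
  have h4 : (fun n : ℕ => ‖c j * w j ^ n‖) = fun _ => ‖c j‖ := by
    funext n
    rw [norm_mul, norm_pow, hw1 j, one_pow, mul_one]
  rw [h4] at h3
  have := tendsto_nhds_unique h3 tendsto_const_nhds
  simpa using this.symm
end

/-- Let `V = V⁺ ⊕ V⁻` be a finite-dimensional `ℤ/2`-graded complex vector space and
`A = A⁺ ⊕ A⁻` an even endomorphism. Let `ρ` be the spectral radius of `A` (the greatest
modulus of an eigenvalue of `A⁺` or `A⁻`, or `0` if there are none). If `A⁺` and `A⁻` do
not have the same eigenvalues with multiplicity on the circle `{|λ| = ρ}`, then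
`limsup |sTr Aⁿ|^{1/n} = ρ`, where `sTr Aⁿ = Tr (A⁺)ⁿ - Tr (A⁻)ⁿ`. -/
theorem supertrace_spectral_radius
    (Vp Vm : Type) [AddCommGroup Vp] [Module ℂ Vp] [FiniteDimensional ℂ Vp]
    [AddCommGroup Vm] [Module ℂ Vm] [FiniteDimensional ℂ Vm]
    (Ap : Vp →ₗ[ℂ] Vp) (Am : Vm →ₗ[ℂ] Vm) (ρ : ℝ)
    (hρ : IsGreatest (insert 0
      {x : ℝ | ∃ μ ∈ (LinearMap.charpoly Ap).roots + (LinearMap.charpoly Am).roots,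
        ‖μ‖ = x}) ρ)
    (hne : ((LinearMap.charpoly Ap).roots.filter (fun μ => ‖μ‖ = ρ)) ≠
           ((LinearMap.charpoly Am).roots.filter (fun μ => ‖μ‖ = ρ))) :
    Filter.limsup
      (fun n : ℕ =>
        ‖LinearMap.trace ℂ Vp (Ap ^ n) - LinearMap.trace ℂ Vm (Am ^ n)‖
          ^ ((1 : ℝ) / n)) Filter.atTop = ρ := by
  set S : Multiset ℂ := (LinearMap.charpoly Ap).roots with hSdef
  set T : Multiset ℂ := (LinearMap.charpoly Am).roots with hTdef
  set φ : ℕ → ℝ := fun n =>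
    ‖LinearMap.trace ℂ Vp (Ap ^ n) - LinearMap.trace ℂ Vm (Am ^ n)‖ with hφdef
  have hφ0 : ∀ n, 0 ≤ φ n := fun n => norm_nonneg _
  have hρ0 : 0 ≤ ρ := hρ.2 (Set.mem_insert 0 _)
  have hroot : ∀ μ ∈ S + T, ‖μ‖ ≤ ρ := fun μ hμ =>
    hρ.2 (Set.mem_insert_iff.mpr (Or.inr ⟨μ, hμ, rfl⟩))
  have htr : ∀ n : ℕ, 1 ≤ n →
      LinearMap.trace ℂ Vp (Ap ^ n) - LinearMap.trace ℂ Vm (Am ^ n)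
        = (S.map (fun μ => μ ^ n)).sum - (T.map (fun μ => μ ^ n)).sum := by
    intro n hn
    rw [trace_pow_lm Ap hn, trace_pow_lm Am hn]
  -- generic bound
  have habs : ∀ (U : Multiset ℂ) (n : ℕ) (r : ℝ), 0 ≤ r → (∀ μ ∈ U, ‖μ‖ ≤ r) →
      ‖(U.map (fun μ => μ ^ n)).sum‖ ≤ (Multiset.card U : ℝ) * r ^ n := by
    intro U n r hr hU
    have h1 : ‖(U.map (fun μ => μ ^ n)).sum‖
        ≤ ((U.map (fun μ => μ ^ n)).map (fun z => ‖z‖)).sum := by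
      exact norm_multiset_sum_le (U.map (fun μ => μ ^ n))
    have h2 : ((U.map (fun μ => μ ^ n)).map (fun z => ‖z‖)).sum
        ≤ (Multiset.card ((U.map (fun μ => μ ^ n)).map (fun z => ‖z‖))) • (r ^ n) := by
      apply Multiset.sum_le_card_nsmul
      intro x hx
      obtain ⟨z, hz, rfl⟩ := Multiset.mem_map.mp hx
      obtain ⟨μ, hμ, rfl⟩ := Multiset.mem_map.mp hz
      rw [norm_pow]
      exact pow_le_pow_left₀ (norm_nonneg _) (hU μ hμ) n
    refine h1.trans (h2.trans ?_)
    simp [nsmul_eq_mul]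
  rcases eq_or_lt_of_le hρ0 with hish | hρpos
  · -- ρ = 0 case
    have hzero : ∀ μ ∈ S + T, μ = 0 := by
      intro μ hμ
      have := hroot μ hμ
      rw [← hish] at this
      simpa using le_antisymm this (norm_nonneg _)
    have hev : (fun n : ℕ => φ n ^ ((1:ℝ)/n)) =ᶠ[atTop] (fun _ => (0:ℝ)) := by
      filter_upwards [eventually_ge_atTop 1] with n hn
      have hf0 : φ n = 0 := by
        rw [hφdef]
        simp only
        rw [htr n hn]
        have e1 : (S.map (fun μ => μ ^ n)).sum = 0 := by
          apply Multiset.sum_eq_zero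
          intro x hx
          obtain ⟨μ, hμ, rfl⟩ := Multiset.mem_map.mp hx
          rw [hzero μ (Multiset.mem_add.mpr (Or.inl hμ)), zero_pow (by omega)]
        have e2 : (T.map (fun μ => μ ^ n)).sum = 0 := by
          apply Multiset.sum_eq_zero
          intro x hx
          obtain ⟨μ, hμ, rfl⟩ := Multiset.mem_map.mp hx
          rw [hzero μ (Multiset.mem_add.mpr (Or.inr hμ)), zero_pow (by omega)]
        rw [e1, e2]
        simp
      rw [hf0, Real.zero_rpow (by
        have hn' : (0:ℝ) < n := by exact_mod_cast hn
        positivity)]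
    rw [limsup_congr hev, limsup_const, ← hish]
  · -- ρ > 0 case
    set K : ℝ := ((Multiset.card S : ℝ) + (Multiset.card T : ℝ)) + 1 with hKdef
    have hKpos : 0 < K := by positivity
    have hub0 : ∀ n : ℕ, 1 ≤ n → φ n ≤ K * ρ ^ n := by
      intro n hn
      rw [hφdef]
      simp only
      rw [htr n hn]
      have h1 := habs S n ρ hρ0 (fun μ hμ => hroot μ (Multiset.mem_add.mpr (Or.inl hμ)))
      have h2 := habs T n ρ hρ0 (fun μ hμ => hroot μ (Multiset.mem_add.mpr (Or.inr hμ)))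
      have h3 := norm_sub_le_norm_sub_add_norm_sub ((S.map (fun μ => μ ^ n)).sum) 0 ((T.map (fun μ => μ ^ n)).sum)
      simp only [sub_zero, zero_sub, norm_neg] at h3
      have hρn : (0:ℝ) ≤ ρ ^ n := by positivity
      nlinarith
    have hble : (fun n : ℕ => φ n ^ ((1:ℝ)/n)) ≤ᶠ[atTop] (fun n : ℕ => K ^ ((1:ℝ)/n) * ρ) := by
      filter_upwards [eventually_ge_atTop 1] with n hn
      have hn0 : n ≠ 0 := by omega
      calc φ n ^ ((1:ℝ)/n) ≤ (K * ρ ^ n) ^ ((1:ℝ)/n) := by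
            apply Real.rpow_le_rpow (hφ0 n) (hub0 n hn)
            positivity
        _ = K ^ ((1:ℝ)/n) * (ρ ^ n) ^ ((1:ℝ)/n) := by
            apply Real.mul_rpow hKpos.le (by positivity)
        _ = K ^ ((1:ℝ)/n) * ρ := by
            rw [one_div, Real.pow_rpow_inv_natCast hρ0 hn0]
    have hbtend : Tendsto (fun n : ℕ => K ^ ((1:ℝ)/n) * ρ) atTop (nhds ρ) := by
      have h1 : Tendsto (fun n : ℕ => (1:ℝ)/n) atTop (nhds 0) :=
        tendsto_one_div_atTop_nhds_zero_nat
      have h2 : Tendsto (fun n : ℕ => K ^ ((1:ℝ)/n)) atTop (nhds 1) := by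
        have h3 := Filter.Tendsto.rpow
          (tendsto_const_nhds : Tendsto (fun _ : ℕ => K) atTop (nhds K)) h1 (Or.inl hKpos.ne')
        simpa using h3
      simpa using h2.mul_const ρ
    have hup : limsup (fun n : ℕ => φ n ^ ((1:ℝ)/n)) atTop ≤ ρ := by
      have hcob : IsCoboundedUnder (· ≤ ·) atTop (fun n : ℕ => φ n ^ ((1:ℝ)/n)) :=
        isCoboundedUnder_le_of_le atTop (fun n => Real.rpow_nonneg (hφ0 n) _)
      calc limsup (fun n : ℕ => φ n ^ ((1:ℝ)/n)) atTop
          ≤ limsup (fun n : ℕ => K ^ ((1:ℝ)/n) * ρ) atTop :=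
            limsup_le_limsup hble hcob hbtend.isBoundedUnder_le
        _ = ρ := hbtend.limsup_eq
    by_contra hne'
    have hL : limsup (fun n : ℕ => φ n ^ ((1:ℝ)/n)) atTop < ρ := lt_of_le_of_ne hup hne'
    set L := limsup (fun n : ℕ => φ n ^ ((1:ℝ)/n)) atTop with hLdef
    set r : ℝ := (max L 0 + ρ)/2 with hrdef
    have hrρ : r < ρ := by
      have h1 : max L 0 < ρ := max_lt hL hρpos
      rw [hrdef]; linarith
    have hr0 : 0 < r := by
      have h1 : (0:ℝ) ≤ max L 0 := le_max_right _ _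
      rw [hrdef]; linarith
    have hLr : L < r := by
      have h1 : L ≤ max L 0 := le_max_left _ _
      rw [hrdef]; linarith
    have hev2 : ∀ᶠ n in atTop, φ n ^ ((1:ℝ)/n) < r := by
      exact eventually_lt_of_limsup_lt hLr (hbtend.isBoundedUnder_le.mono_le hble)
    have hfn : ∀ᶠ n in atTop, φ n ≤ r ^ n := by
      filter_upwards [hev2, eventually_ge_atTop 1] with n h1 hn
      have hn0 : n ≠ 0 := by omega
      have e1 : φ n = (φ n ^ ((1:ℝ)/n)) ^ n := by
        rw [one_div, Real.rpow_inv_natCast_pow (hφ0 n) hn0]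
      rw [e1]
      exact pow_le_pow_left₀ (Real.rpow_nonneg (hφ0 n) _) h1.le n
    set S0 : Multiset ℂ := S.filter (fun μ => ‖μ‖ = ρ) with hS0def
    set S1 : Multiset ℂ := S.filter (fun μ => ¬ ‖μ‖ = ρ) with hS1def
    set T0 : Multiset ℂ := T.filter (fun μ => ‖μ‖ = ρ) with hT0def
    set T1 : Multiset ℂ := T.filter (fun μ => ¬ ‖μ‖ = ρ) with hT1def
    have hS01 : S0 + S1 = S := Multiset.filter_add_not _ _
    have hT01 : T0 + T1 = T := Multiset.filter_add_not _ _
    set E : Finset ℝ := insert (ρ/2) (((S1 + T1).map (fun μ => ‖μ‖)).toFinset) with hEdef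
    have hEne : E.Nonempty := Finset.insert_nonempty _ _
    set r2 : ℝ := E.max' hEne with hr2def
    have hr2lt : r2 < ρ := by
      rw [hr2def, Finset.max'_lt_iff]
      intro x hx
      rcases Finset.mem_insert.mp hx with h | h
      · rw [h]; linarith
      · obtain ⟨μ, hμ, rfl⟩ := Multiset.mem_map.mp (Multiset.mem_toFinset.mp h)
        have hμST : μ ∈ S + T := by
          rcases Multiset.mem_add.mp hμ with h' | h'
          · exact Multiset.mem_add.mpr (Or.inl (Multiset.mem_filter.mp h').1)
          · exact Multiset.mem_add.mpr (Or.inr (Multiset.mem_filter.mp h').1)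
        have hne2 : ¬ ‖μ‖ = ρ := by
          rcases Multiset.mem_add.mp hμ with h' | h'
          · exact (Multiset.mem_filter.mp h').2
          · exact (Multiset.mem_filter.mp h').2
        exact lt_of_le_of_ne (hroot μ hμST) hne2
    have hr2pos : 0 < r2 := by
      have h1 := Finset.le_max' E (ρ/2) (Finset.mem_insert_self _ _)
      rw [hr2def]
      linarith [half_pos hρpos]
    have hr2bd : ∀ μ ∈ S1 + T1, ‖μ‖ ≤ r2 :=
      fun μ hμ => Finset.le_max' _ _
        (Finset.mem_insert_of_mem (Multiset.mem_toFinset.mpr (Multiset.mem_map_of_mem _ hμ)))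
    set F : Finset ℂ := S0.toFinset ∪ T0.toFinset with hFdef
    set c0 : ℂ → ℂ := fun μ => (S0.count μ : ℂ) - (T0.count μ : ℂ) with hc0def
    set g : ℕ → ℂ := fun n => ∑ μ ∈ F, c0 μ * μ ^ n with hgdef
    have hsum : ∀ (U : Multiset ℂ), U.toFinset ⊆ F → ∀ n : ℕ,
        (U.map (fun μ => μ ^ n)).sum = ∑ μ ∈ F, (U.count μ : ℂ) * μ ^ n := by
      intro U hU n
      rw [Finset.sum_multiset_map_count, Finset.sum_subset hU]
      · exact Finset.sum_congr rfl (fun μ _ => by simp [nsmul_eq_mul])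
      · intro x _ hx
        simp [Multiset.count_eq_zero_of_notMem (fun hmem => hx (Multiset.mem_toFinset.mpr hmem))]
    have hg : ∀ n : ℕ, g n = (S0.map (fun μ => μ ^ n)).sum - (T0.map (fun μ => μ ^ n)).sum := by
      intro n
      rw [hsum S0 Finset.subset_union_left n, hsum T0 Finset.subset_union_right n, hgdef]
      simp only
      rw [← Finset.sum_sub_distrib]
      exact Finset.sum_congr rfl (fun μ _ => by rw [hc0def]; ring)
    have hh : ∀ n : ℕ, ‖
        (S1.map (fun μ => μ ^ n)).sum - (T1.map (fun μ => μ ^ n)).sum‖ ≤ K * r2 ^ n := by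
      intro n
      have h1 := habs S1 n r2 hr2pos.le
        (fun μ hμ => hr2bd μ (Multiset.mem_add.mpr (Or.inl hμ)))
      have h2 := habs T1 n r2 hr2pos.le
        (fun μ hμ => hr2bd μ (Multiset.mem_add.mpr (Or.inr hμ)))
      have h3 := norm_sub_le_norm_sub_add_norm_sub ((S1.map (fun μ => μ ^ n)).sum) 0
        ((T1.map (fun μ => μ ^ n)).sum)
      simp only [sub_zero, zero_sub, norm_neg] at h3
      have hc1 : (Multiset.card S1 : ℝ) ≤ Multiset.card S := by
        exact_mod_cast Multiset.card_le_card (Multiset.filter_le _ _)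
      have hc2 : (Multiset.card T1 : ℝ) ≤ Multiset.card T := by
        exact_mod_cast Multiset.card_le_card (Multiset.filter_le _ _)
      have hr2n : (0:ℝ) ≤ r2 ^ n := by positivity
      nlinarith
    have hgsmall : ∀ᶠ n in atTop, ‖g n‖ ≤ r ^ n + K * r2 ^ n := by
      filter_upwards [hfn, eventually_ge_atTop 1] with n h1 hn
      have hdec : g n = (LinearMap.trace ℂ Vp (Ap ^ n) - LinearMap.trace ℂ Vm (Am ^ n))
          - ((S1.map (fun μ => μ ^ n)).sum - (T1.map (fun μ => μ ^ n)).sum) := by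
        rw [htr n hn, hg n]
        have e1 : (S.map (fun μ => μ ^ n)).sum
            = (S0.map (fun μ => μ ^ n)).sum + (S1.map (fun μ => μ ^ n)).sum := by
          rw [← hS01, Multiset.map_add, Multiset.sum_add]
        have e2 : (T.map (fun μ => μ ^ n)).sum
            = (T0.map (fun μ => μ ^ n)).sum + (T1.map (fun μ => μ ^ n)).sum := by
          rw [← hT01, Multiset.map_add, Multiset.sum_add]
        rw [e1, e2]
        ring
      rw [hdec]
      have h3 := norm_sub_le_norm_sub_add_norm_sub
        (LinearMap.trace ℂ Vp (Ap ^ n) - LinearMap.trace ℂ Vm (Am ^ n)) 0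
        ((S1.map (fun μ => μ ^ n)).sum - (T1.map (fun μ => μ ^ n)).sum)
      simp only [sub_zero, zero_sub, norm_neg] at h3
      have h4 : φ n ≤ r ^ n := h1
      exact h3.trans (add_le_add h4 (hh n))
    have hgz : Tendsto (fun n : ℕ => g n / (ρ:ℂ) ^ n) atTop (nhds 0) := by
      apply squeeze_zero_norm' (a := fun n : ℕ => (r/ρ) ^ n + K * (r2/ρ) ^ n)
      · filter_upwards [hgsmall] with n h1
        have hρn : (0:ℝ) < ρ ^ n := by positivity
        have e1 : ‖g n / (ρ:ℂ) ^ n‖ = ‖g n‖ / ρ ^ n := by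
          rw [norm_div, norm_pow, Complex.norm_real, Real.norm_of_nonneg hρ0]
        have e2 : (r/ρ) ^ n + K * (r2/ρ) ^ n = (r ^ n + K * r2 ^ n) / ρ ^ n := by
          simp only [div_pow, add_div, mul_div_assoc]
        rw [e1, e2]
        gcongr
      · have t1 : Tendsto (fun n : ℕ => (r/ρ) ^ n) atTop (nhds 0) :=
          tendsto_pow_atTop_nhds_zero_of_lt_one (by positivity)
            ((div_lt_one hρpos).mpr hrρ)
        have t2 : Tendsto (fun n : ℕ => K * (r2/ρ) ^ n) atTop (nhds 0) := by
          have t3 := tendsto_pow_atTop_nhds_zero_of_lt_one (r := r2/ρ) (by positivity)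
            ((div_lt_one hρpos).mpr hr2lt)
          simpa using t3.const_mul K
        simpa using t1.add t2
    have hFρ : ∀ μ ∈ F, ‖μ‖ = ρ := by
      intro μ hμ
      rcases Finset.mem_union.mp hμ with h | h
      · exact (Multiset.mem_filter.mp (Multiset.mem_toFinset.mp h)).2
      · exact (Multiset.mem_filter.mp (Multiset.mem_toFinset.mp h)).2
    have hρC : ((ρ:ℝ) : ℂ) ≠ 0 := by
      exact_mod_cast hρpos.ne'
    set ee : ↥F ≃ Fin (Fintype.card ↥F) := Fintype.equivFin ↥F with heedef
    set w : Fin (Fintype.card ↥F) → ℂ := fun i => ((ee.symm i : ℂ)) / (ρ:ℂ) with hwdef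
    have hwinj : Function.Injective w := by
      intro i j hij
      rw [hwdef] at hij
      simp only at hij
      have h1 : ((ee.symm i : ℂ)) = ((ee.symm j : ℂ)) := by
        field_simp at hij
        exact hij
      exact ee.symm.injective (Subtype.ext h1)
    have hw1 : ∀ i, ‖w i‖ = 1 := by
      intro i
      rw [hwdef]
      simp only
      rw [norm_div, hFρ _ (ee.symm i).2, Complex.norm_real, Real.norm_of_nonneg hρ0,
        div_self hρpos.ne']
    set c' : Fin (Fintype.card ↥F) → ℂ := fun i => c0 (ee.symm i : ℂ) with hc'def
    have hsum_eq : ∀ n : ℕ, (∑ i, c' i * w i ^ n) = g n / (ρ:ℂ) ^ n := by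
      intro n
      have e1 : (∑ i, c' i * w i ^ n)
          = ∑ μ : ↥F, c0 (μ : ℂ) * (((μ : ℂ)) / (ρ:ℂ)) ^ n :=
        Equiv.sum_comp ee.symm (fun μ : ↥F => c0 (μ : ℂ) * (((μ : ℂ)) / (ρ:ℂ)) ^ n)
      rw [e1, Finset.sum_coe_sort F (fun μ => c0 μ * ((μ / (ρ:ℂ)) ^ n)), hgdef]
      simp only
      rw [Finset.sum_div]
      refine Finset.sum_congr rfl (fun μ _ => ?_)
      rw [div_pow]
      ring
    have htend : Tendsto (fun n : ℕ => ∑ i, c' i * w i ^ n) atTop (nhds 0) := by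
      have e1 : (fun n : ℕ => ∑ i, c' i * w i ^ n) = fun n : ℕ => g n / (ρ:ℂ) ^ n :=
        funext hsum_eq
      rw [e1]
      exact hgz
    have hczero := expsum_coeff_zero w hwinj hw1 c' htend
    have hcount : ∀ μ : ℂ, S0.count μ = T0.count μ := by
      intro μ
      by_cases hμ : μ ∈ F
      · have h0 := hczero (ee ⟨μ, hμ⟩)
        rw [hc'def] at h0
        simp only [Equiv.symm_apply_apply] at h0
        rw [hc0def] at h0
        simp only at h0
        have h1 : (S0.count μ : ℂ) = (T0.count μ : ℂ) := by
          have := sub_eq_zero.mp h0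
          exact_mod_cast this
        exact_mod_cast h1
      · have h1 : μ ∉ S0.toFinset := fun h => hμ (Finset.mem_union_left _ h)
        have h2 : μ ∉ T0.toFinset := fun h => hμ (Finset.mem_union_right _ h)
        rw [Multiset.count_eq_zero_of_notMem (fun h => h1 (Multiset.mem_toFinset.mpr h)),
          Multiset.count_eq_zero_of_notMem (fun h => h2 (Multiset.mem_toFinset.mpr h))]
    exact hne (Multiset.ext.mpr hcount)
end

section
/- Define the positive root system of the l-Kronecker quiver as Δ_{l+} = {(n,m) ∈ ℕ² \ {(0,0)} : n² + m² − l·n·m ≤ 1}. For l ≥ 3, the real roots (those with n² + m² − l·n·m = 1) are exactly (1,0), (0,1), and the pairs (n,m) with n,m ≥ 1, gcd(n,m) = 1, and n/m = (l ± √(l²−4+4/m²))/2. -/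
/-- For `l ≥ 3`, the real roots of the `l`-Kronecker quiver, i.e. pairs `(n,m) ∈ ℕ²`
with `n² + m² − l·n·m = 1`, are exactly `(1,0)`, `(0,1)`, and the pairs with
`n, m ≥ 1`, `gcd(n,m) = 1` and `n/m = (l ± √(l² − 4 + 4/m²))/2`. -/
theorem kronecker_real_roots (l : ℕ) (hl : 3 ≤ l) :
    {p : ℕ × ℕ | (p.1 : ℤ) ^ 2 + (p.2 : ℤ) ^ 2 - (l : ℤ) * p.1 * p.2 = 1} =
      ({(1, 0), (0, 1)} : Set (ℕ × ℕ)) ∪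
        {p : ℕ × ℕ | 1 ≤ p.1 ∧ 1 ≤ p.2 ∧ Nat.gcd p.1 p.2 = 1 ∧
          ((p.1 : ℝ) / (p.2 : ℝ) =
              ((l : ℝ) + Real.sqrt ((l : ℝ) ^ 2 - 4 + 4 / (p.2 : ℝ) ^ 2)) / 2 ∨
           (p.1 : ℝ) / (p.2 : ℝ) =
              ((l : ℝ) - Real.sqrt ((l : ℝ) ^ 2 - 4 + 4 / (p.2 : ℝ) ^ 2)) / 2)} := by
  have hl3 : (3 : ℝ) ≤ (l : ℝ) := by exact_mod_cast hl
  ext ⟨n, m⟩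
  simp only [Set.mem_setOf_eq, Set.mem_union, Set.mem_insert_iff, Set.mem_singleton_iff,
    Prod.mk.injEq]
  constructor
  · intro h
    rcases Nat.eq_zero_or_pos m with hm | hm
    · subst hm
      left; left
      refine ⟨?_, rfl⟩
      have hn2 : (n : ℤ) ^ 2 = 1 := by push_cast at h; linarith
      have hn0 : (0 : ℤ) ≤ (n : ℤ) := Int.natCast_nonneg n
      have : (n : ℤ) = 1 := by nlinarith [sq_nonneg ((n : ℤ) - 1)]
      exact_mod_cast this
    rcases Nat.eq_zero_or_pos n with hn | hn
    · subst hn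
      left; right
      refine ⟨rfl, ?_⟩
      have hm2 : (m : ℤ) ^ 2 = 1 := by push_cast at h; linarith
      have hm0 : (0 : ℤ) ≤ (m : ℤ) := Int.natCast_nonneg m
      have : (m : ℤ) = 1 := by nlinarith [sq_nonneg ((m : ℤ) - 1)]
      exact_mod_cast this
    · right
      have hm0 : (m : ℝ) ≠ 0 := by
        have : (0 : ℝ) < (m : ℝ) := by exact_mod_cast hm
        linarith
      have keyZ : (2 * (n : ℤ) - l * m) ^ 2 = ((l : ℤ) ^ 2 - 4) * m ^ 2 + 4 := by
        linear_combination 4 * h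
      have key : (2 * (n : ℝ) - l * m) ^ 2 = ((l : ℝ) ^ 2 - 4) * m ^ 2 + 4 := by
        exact_mod_cast keyZ
      refine ⟨hn, hm, ?_, ?_⟩
      · -- gcd
        have h1 : ((Nat.gcd n m : ℤ)) ∣ (n : ℤ) :=
          Int.natCast_dvd_natCast.mpr (Nat.gcd_dvd_left n m)
        have h2 : ((Nat.gcd n m : ℤ)) ∣ (m : ℤ) :=
          Int.natCast_dvd_natCast.mpr (Nat.gcd_dvd_right n m)
        have hd : ((Nat.gcd n m : ℤ)) ∣ 1 := by
          rw [← h]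
          exact dvd_sub (dvd_add (dvd_pow h1 two_ne_zero) (dvd_pow h2 two_ne_zero))
            (h2.mul_left ((l : ℤ) * n))
        have : Nat.gcd n m ∣ 1 := by exact_mod_cast hd
        exact Nat.dvd_one.mp this
      · have hx : ((2 * (n : ℝ) - l * m) / m) ^ 2 =
            (l : ℝ) ^ 2 - 4 + 4 / (m : ℝ) ^ 2 := by
          rw [div_pow, key]
          field_simp
        have hs : Real.sqrt ((l : ℝ) ^ 2 - 4 + 4 / (m : ℝ) ^ 2) =
            |(2 * (n : ℝ) - l * m) / m| := by
          rw [← hx, Real.sqrt_sq_eq_abs]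
        rcases le_or_gt ((l : ℝ) * m) (2 * n) with hc | hc
        · left
          have hxm : (0:ℝ) ≤ (2 * (n : ℝ) - l * m) / m := by
            apply div_nonneg
            · linarith
            · positivity
          rw [hs, abs_of_nonneg hxm]
          field_simp
          ring
        · right
          have hxm : (2 * (n : ℝ) - l * m) / m ≤ 0 := by
            apply div_nonpos_of_nonpos_of_nonneg
            · linarith
            · positivity
          rw [hs, abs_of_nonpos hxm]
          field_simp
          ring
  · rintro ((⟨rfl, rfl⟩ | ⟨rfl, rfl⟩) | ⟨hn, hm, hg, hc⟩)
    · norm_num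
    · norm_num
    · have hm0 : (m : ℝ) ≠ 0 := by
        have : (0 : ℝ) < (m : ℝ) := by exact_mod_cast hm
        linarith
      have hD0 : (0 : ℝ) ≤ (l : ℝ) ^ 2 - 4 + 4 / (m : ℝ) ^ 2 := by
        have h4 : (0 : ℝ) ≤ 4 / (m : ℝ) ^ 2 := by positivity
        nlinarith
      have hsq : (2 * ((n : ℝ) / m) - l) ^ 2 = (l : ℝ) ^ 2 - 4 + 4 / (m : ℝ) ^ 2 := by
        rcases hc with hc | hc
        · have hsd : Real.sqrt ((l : ℝ) ^ 2 - 4 + 4 / (m : ℝ) ^ 2) = 2 * ((n : ℝ) / m) - l := by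
            rw [hc]; ring
          rw [← hsd, Real.sq_sqrt hD0]
        · have hsd : Real.sqrt ((l : ℝ) ^ 2 - 4 + 4 / (m : ℝ) ^ 2) = l - 2 * ((n : ℝ) / m) := by
            rw [hc]; ring
          rw [← Real.sq_sqrt hD0, hsd]; ring
      have key2 : (2 * (n : ℝ) - l * m) ^ 2 = ((l : ℝ) ^ 2 - 4) * m ^ 2 + 4 := by
        have e : (2 * ((n : ℝ) / m) - l) ^ 2 * m ^ 2 = (2 * (n : ℝ) - l * m) ^ 2 := by
          field_simp
        have e2 : ((l : ℝ) ^ 2 - 4 + 4 / (m : ℝ) ^ 2) * m ^ 2 =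
            ((l : ℝ) ^ 2 - 4) * m ^ 2 + 4 := by
          field_simp
        rw [← e, hsq, e2]
      have hr : (n : ℝ) ^ 2 + (m : ℝ) ^ 2 - l * n * m = 1 := by
        linear_combination key2 / 4
      exact_mod_cast hr
end

section
/- Let z₁ = r₁e^{iφ₁}, z₂ = r₂e^{iφ₂} with r₁, r₂ > 0 and 0 < φ₂ < φ₁ ≤ π. Define f : [0,∞) → ℝ by f(x) = arccos((x r₁ cos φ₁ + r₂ cos φ₂)/√(x²r₁² + r₂² + 2x r₁ r₂ cos(φ₁−φ₂))). Then f is strictly increasing, f(0) = φ₂, lim_{x→∞} f(x) = φ₁, and for all α ≥ 0, β > 0, (αz₁ + βz₂)/|αz₁ + βz₂| = e^{i f(α/β)}. -/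
open Real Filter

lemma re_aux (x r₁ r₂ φ₁ φ₂ : ℝ) :
    ((x:ℂ) * ((r₁:ℂ) * Complex.exp ((φ₁:ℂ)*Complex.I)) + (r₂:ℂ) * Complex.exp ((φ₂:ℂ)*Complex.I)).re
      = x * r₁ * Real.cos φ₁ + r₂ * Real.cos φ₂ := by
  simp [Complex.add_re, Complex.mul_re, Complex.exp_ofReal_mul_I_re, Complex.exp_ofReal_mul_I_im]
  ring

lemma im_aux (x r₁ r₂ φ₁ φ₂ : ℝ) :
    ((x:ℂ) * ((r₁:ℂ) * Complex.exp ((φ₁:ℂ)*Complex.I)) + (r₂:ℂ) * Complex.exp ((φ₂:ℂ)*Complex.I)).im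
      = x * r₁ * Real.sin φ₁ + r₂ * Real.sin φ₂ := by
  simp [Complex.add_im, Complex.mul_im, Complex.exp_ofReal_mul_I_re, Complex.exp_ofReal_mul_I_im]
  ring

lemma abs_aux (x r₁ r₂ φ₁ φ₂ : ℝ) :
    ‖(x:ℂ) * ((r₁:ℂ) * Complex.exp ((φ₁:ℂ)*Complex.I)) + (r₂:ℂ) * Complex.exp ((φ₂:ℂ)*Complex.I)‖
      = Real.sqrt (x ^ 2 * r₁ ^ 2 + r₂ ^ 2 + 2 * x * r₁ * r₂ * Real.cos (φ₁ - φ₂)) := by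
  rw [Complex.norm_def, Complex.normSq_apply, re_aux, im_aux]
  congr 1
  rw [Real.cos_sub]
  linear_combination (x^2*r₁^2) * Real.sin_sq_add_cos_sq φ₁ + r₂^2 * Real.sin_sq_add_cos_sq φ₂

lemma im_pos_aux (x r₁ r₂ φ₁ φ₂ : ℝ) (hr₁ : 0 < r₁) (hr₂ : 0 < r₂) (hφ₂ : 0 < φ₂) (hφ : φ₂ < φ₁)
    (hφ₁ : φ₁ ≤ π) (hx : 0 ≤ x) :
    0 < ((x:ℂ) * ((r₁:ℂ) * Complex.exp ((φ₁:ℂ)*Complex.I)) + (r₂:ℂ) * Complex.exp ((φ₂:ℂ)*Complex.I)).im := by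
  rw [im_aux]
  have h1 : 0 < Real.sin φ₂ := Real.sin_pos_of_pos_of_lt_pi hφ₂ (lt_of_lt_of_le hφ hφ₁)
  have h2 : 0 ≤ Real.sin φ₁ := Real.sin_nonneg_of_nonneg_of_le_pi (by linarith) hφ₁
  positivity

lemma arg_aux (x r₁ r₂ φ₁ φ₂ : ℝ) (hr₁ : 0 < r₁) (hr₂ : 0 < r₂) (hφ₂ : 0 < φ₂) (hφ : φ₂ < φ₁)
    (hφ₁ : φ₁ ≤ π) (hx : 0 ≤ x) :
    Real.arccos ((x * r₁ * Real.cos φ₁ + r₂ * Real.cos φ₂) /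
      Real.sqrt (x ^ 2 * r₁ ^ 2 + r₂ ^ 2 + 2 * x * r₁ * r₂ * Real.cos (φ₁ - φ₂)))
      = Complex.arg ((x:ℂ) * ((r₁:ℂ) * Complex.exp ((φ₁:ℂ)*Complex.I)) + (r₂:ℂ) * Complex.exp ((φ₂:ℂ)*Complex.I)) := by
  set w := (x:ℂ) * ((r₁:ℂ) * Complex.exp ((φ₁:ℂ)*Complex.I)) + (r₂:ℂ) * Complex.exp ((φ₂:ℂ)*Complex.I) with hw
  have him : 0 < w.im := im_pos_aux x r₁ r₂ φ₁ φ₂ hr₁ hr₂ hφ₂ hφ hφ₁ hx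
  have hne : w ≠ 0 := by
    intro h; rw [h] at him; simp at him
  rw [← re_aux x r₁ r₂ φ₁ φ₂, ← abs_aux x r₁ r₂ φ₁ φ₂, ← hw, ← Complex.cos_arg hne,
    Real.arccos_cos (Complex.arg_nonneg_iff.2 him.le) (Complex.arg_le_pi w)]

lemma mono_aux (x y r₁ r₂ φ₁ φ₂ : ℝ) (hr₁ : 0 < r₁) (hr₂ : 0 < r₂) (hφ₂ : 0 < φ₂) (hφ : φ₂ < φ₁)
    (hφ₁ : φ₁ ≤ π) (hx : 0 ≤ x) (hxy : x < y) :
    Complex.arg ((x:ℂ) * ((r₁:ℂ) * Complex.exp ((φ₁:ℂ)*Complex.I)) + (r₂:ℂ) * Complex.exp ((φ₂:ℂ)*Complex.I))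
      < Complex.arg ((y:ℂ) * ((r₁:ℂ) * Complex.exp ((φ₁:ℂ)*Complex.I)) + (r₂:ℂ) * Complex.exp ((φ₂:ℂ)*Complex.I)) := by
  set u := (x:ℂ) * ((r₁:ℂ) * Complex.exp ((φ₁:ℂ)*Complex.I)) + (r₂:ℂ) * Complex.exp ((φ₂:ℂ)*Complex.I) with hu
  set v := (y:ℂ) * ((r₁:ℂ) * Complex.exp ((φ₁:ℂ)*Complex.I)) + (r₂:ℂ) * Complex.exp ((φ₂:ℂ)*Complex.I) with hv
  have hui : 0 < u.im := im_pos_aux x r₁ r₂ φ₁ φ₂ hr₁ hr₂ hφ₂ hφ hφ₁ hx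
  have hvi : 0 < v.im := im_pos_aux y r₁ r₂ φ₁ φ₂ hr₁ hr₂ hφ₂ hφ hφ₁ (by linarith)
  have hune : u ≠ 0 := fun h => by rw [h] at hui; simp at hui
  have hvne : v ≠ 0 := fun h => by rw [h] at hvi; simp at hvi
  have hua : 0 < ‖u‖ := norm_pos_iff.mpr hune
  have hva : 0 < ‖v‖ := norm_pos_iff.mpr hvne
  have hnum : 0 < v.im * u.re - v.re * u.im := by
    rw [im_aux, re_aux, im_aux, re_aux]
    have hs : 0 < Real.sin (φ₁ - φ₂) := Real.sin_pos_of_pos_of_lt_pi (by linarith) (by linarith)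
    have expand : (y * r₁ * Real.sin φ₁ + r₂ * Real.sin φ₂) * (x * r₁ * Real.cos φ₁ + r₂ * Real.cos φ₂)
        - (y * r₁ * Real.cos φ₁ + r₂ * Real.cos φ₂) * (x * r₁ * Real.sin φ₁ + r₂ * Real.sin φ₂)
        = (y - x) * r₁ * r₂ * Real.sin (φ₁ - φ₂) := by
      rw [Real.sin_sub]; ring
    rw [expand]
    have : 0 < y - x := by linarith
    positivity
  have hsin : 0 < Real.sin (v.arg - u.arg) := by
    rw [Real.sin_sub, Complex.sin_arg, Complex.cos_arg hune, Complex.cos_arg hvne, Complex.sin_arg]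
    rw [div_mul_div_comm, div_mul_div_comm, div_sub_div_same]
    apply div_pos hnum (by positivity)
  by_contra h
  push_neg at h
  have h1 : -π ≤ v.arg - u.arg := by
    have := Complex.arg_nonneg_iff.2 hvi.le
    have := Complex.arg_le_pi u
    linarith
  have := Real.sin_nonpos_of_nonpos_of_neg_pi_le (by linarith) h1
  linarith

lemma tendsto_aux (r₁ r₂ φ₁ φ₂ : ℝ) (hr₁ : 0 < r₁) (hφ₂ : 0 < φ₂) (hφ : φ₂ < φ₁) (hφ₁ : φ₁ ≤ π) :
    Tendsto (fun x => Real.arccos ((x * r₁ * Real.cos φ₁ + r₂ * Real.cos φ₂) /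
      Real.sqrt (x ^ 2 * r₁ ^ 2 + r₂ ^ 2 + 2 * x * r₁ * r₂ * Real.cos (φ₁ - φ₂)))) atTop (nhds φ₁) := by
  have hnum : Tendsto (fun x : ℝ => r₁ * Real.cos φ₁ + r₂ * Real.cos φ₂ / x) atTop
      (nhds (r₁ * Real.cos φ₁)) := by
    have := tendsto_const_nhds (α := ℝ) (x := r₂ * Real.cos φ₂) (f := atTop).div_atTop tendsto_id
    simpa using (tendsto_const_nhds (α := ℝ) (x := r₁ * Real.cos φ₁) (f := atTop)).add this
  have hin : Tendsto (fun x : ℝ => r₁ ^ 2 + (r₂ ^ 2 / x ^ 2 + 2 * r₁ * r₂ * Real.cos (φ₁ - φ₂) / x))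
      atTop (nhds (r₁ ^ 2)) := by
    have h1 : Tendsto (fun x : ℝ => r₂ ^ 2 / x ^ 2) atTop (nhds 0) :=
      tendsto_const_nhds.div_atTop (tendsto_pow_atTop two_ne_zero)
    have h2 : Tendsto (fun x : ℝ => 2 * r₁ * r₂ * Real.cos (φ₁ - φ₂) / x) atTop (nhds 0) :=
      tendsto_const_nhds.div_atTop tendsto_id
    simpa using tendsto_const_nhds.add (h1.add h2)
  have hden : Tendsto (fun x : ℝ => Real.sqrt (r₁ ^ 2 + (r₂ ^ 2 / x ^ 2 + 2 * r₁ * r₂ * Real.cos (φ₁ - φ₂) / x)))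
      atTop (nhds r₁) := by
    have := (Real.continuous_sqrt.continuousAt (x := r₁ ^ 2)).tendsto.comp hin
    simpa [Function.comp_def, Real.sqrt_sq hr₁.le] using this
  have hdiv := hnum.div hden hr₁.ne'
  have harc := (Real.continuous_arccos.continuousAt.tendsto).comp hdiv
  have : r₁ * Real.cos φ₁ / r₁ = Real.cos φ₁ := by field_simp
  rw [this, Real.arccos_cos (by linarith) hφ₁] at harc
  apply harc.congr'
  filter_upwards [eventually_gt_atTop (0:ℝ)] with x hx
  simp only [Function.comp_apply, Pi.div_apply]
  congr 1
  have hsq : x ^ 2 * r₁ ^ 2 + r₂ ^ 2 + 2 * x * r₁ * r₂ * Real.cos (φ₁ - φ₂)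
      = x ^ 2 * (r₁ ^ 2 + (r₂ ^ 2 / x ^ 2 + 2 * r₁ * r₂ * Real.cos (φ₁ - φ₂) / x)) := by
    field_simp; ring
  rw [hsq, Real.sqrt_mul (sq_nonneg x), Real.sqrt_sq hx.le]
  rw [show x * r₁ * Real.cos φ₁ + r₂ * Real.cos φ₂ = x * (r₁ * Real.cos φ₁ + r₂ * Real.cos φ₂ / x) by
    field_simp]
  rw [mul_div_mul_left _ _ hx.ne']

/-- Let `z₁ = r₁e^{iφ₁}`, `z₂ = r₂e^{iφ₂}` with `r₁, r₂ > 0` and `0 < φ₂ < φ₁ ≤ π`, and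
`f(x) = arccos((x r₁ cos φ₁ + r₂ cos φ₂)/√(x²r₁² + r₂² + 2x r₁ r₂ cos(φ₁−φ₂)))`.
Then `f` is strictly increasing on `[0,∞)`, `f(0) = φ₂`, `f(x) → φ₁` as `x → ∞`, and for
`α ≥ 0`, `β > 0`, `(αz₁ + βz₂)/|αz₁ + βz₂| = e^{i f(α/β)}`. -/
theorem argument_function_properties (r₁ r₂ φ₁ φ₂ : ℝ)
    (hr₁ : 0 < r₁) (hr₂ : 0 < r₂) (hφ₂ : 0 < φ₂) (hφ : φ₂ < φ₁) (hφ₁ : φ₁ ≤ π)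
    (f : ℝ → ℝ)
    (hf : ∀ x, f x = Real.arccos ((x * r₁ * Real.cos φ₁ + r₂ * Real.cos φ₂) /
      Real.sqrt (x ^ 2 * r₁ ^ 2 + r₂ ^ 2 + 2 * x * r₁ * r₂ * Real.cos (φ₁ - φ₂)))) :
    StrictMonoOn f (Set.Ici 0) ∧ f 0 = φ₂ ∧
    Filter.Tendsto f Filter.atTop (nhds φ₁) ∧
    ∀ α β : ℝ, 0 ≤ α → 0 < β →
      ((α : ℂ) * ((r₁ : ℂ) * Complex.exp ((φ₁ : ℂ) * Complex.I)) +
        (β : ℂ) * ((r₂ : ℂ) * Complex.exp ((φ₂ : ℂ) * Complex.I))) /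
        ((‖(α : ℂ) * ((r₁ : ℂ) * Complex.exp ((φ₁ : ℂ) * Complex.I)) +
          (β : ℂ) * ((r₂ : ℂ) * Complex.exp ((φ₂ : ℂ) * Complex.I))‖ : ℝ) : ℂ) =
        Complex.exp ((f (α / β) : ℂ) * Complex.I) := by
  refine ⟨?_, ?_, ?_, ?_⟩
  · intro x hx y hy hxy
    rw [hf, hf, arg_aux x r₁ r₂ φ₁ φ₂ hr₁ hr₂ hφ₂ hφ hφ₁ hx,
      arg_aux y r₁ r₂ φ₁ φ₂ hr₁ hr₂ hφ₂ hφ hφ₁ hy]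
    exact mono_aux x y r₁ r₂ φ₁ φ₂ hr₁ hr₂ hφ₂ hφ hφ₁ hx hxy
  · rw [hf, arg_aux 0 r₁ r₂ φ₁ φ₂ hr₁ hr₂ hφ₂ hφ hφ₁ le_rfl]
    norm_num
    rw [Complex.exp_mul_I, Complex.arg_real_mul _ hr₂]
    exact Complex.arg_cos_add_sin_mul_I ⟨by linarith [Real.pi_pos], by linarith⟩
  · have := tendsto_aux r₁ r₂ φ₁ φ₂ hr₁ hφ₂ hφ hφ₁
    apply this.congr
    intro x
    rw [hf]
  · intro α β hα hβ
    have hq : 0 ≤ α / β := div_nonneg hα hβ.le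
    set u := ((α/β : ℝ):ℂ) * ((r₁:ℂ) * Complex.exp ((φ₁:ℂ)*Complex.I))
        + (r₂:ℂ) * Complex.exp ((φ₂:ℂ)*Complex.I) with hu
    have hfq : f (α/β) = Complex.arg u := by
      rw [hf]; exact arg_aux (α/β) r₁ r₂ φ₁ φ₂ hr₁ hr₂ hφ₂ hφ hφ₁ hq
    have hune : u ≠ 0 := by
      have := im_pos_aux (α/β) r₁ r₂ φ₁ φ₂ hr₁ hr₂ hφ₂ hφ hφ₁ hq
      intro h; rw [← hu] at this; rw [h] at this; simp at this
    have hw : (α : ℂ) * ((r₁ : ℂ) * Complex.exp ((φ₁ : ℂ) * Complex.I)) +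
        (β : ℂ) * ((r₂ : ℂ) * Complex.exp ((φ₂ : ℂ) * Complex.I)) = (β:ℂ) * u := by
      rw [hu]
      push_cast
      have : (β:ℂ) ≠ 0 := by exact_mod_cast hβ.ne'
      field_simp
    have hwne : (α : ℂ) * ((r₁ : ℂ) * Complex.exp ((φ₁ : ℂ) * Complex.I)) +
        (β : ℂ) * ((r₂ : ℂ) * Complex.exp ((φ₂ : ℂ) * Complex.I)) ≠ 0 := by
      rw [hw]
      exact mul_ne_zero (by exact_mod_cast hβ.ne') hune
    have harg : Complex.arg ((α : ℂ) * ((r₁ : ℂ) * Complex.exp ((φ₁ : ℂ) * Complex.I)) +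
        (β : ℂ) * ((r₂ : ℂ) * Complex.exp ((φ₂ : ℂ) * Complex.I))) = Complex.arg u := by
      rw [hw]; exact Complex.arg_real_mul _ hβ
    rw [hfq, ← harg, div_eq_iff (by exact_mod_cast (norm_pos_iff.mpr hwne).ne')]
    exact (Complex.norm_mul_exp_arg_mul_I _).symm.trans (mul_comm _ _)
end
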